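/- Let h : Q → P be an injective, integral homomorphism of fine, sharp additive commutative monoids, without nilpotents, and suppose P is saturated. Then the quotient group P^gp / Q^gp is torsion free; elementwise: for all p1, p2 ∈ P and all integers n ≥ 1, if there exist q1, q2 ∈ Q with n•p1 + h(q1) = n•p2 + h(q2), then there exist q1', q2' ∈ Q with p1 + h(q1') = p2 + h(q2'). -/

import Mathlib

/-- A (additive commutative) monoid is sharp if `x + y = 0` implies `x = 0`. -/
def Sharp (M : Type*) [AddCommMonoid M] : Prop :=
  ∀ x y : M, x + y = 0 → x = 0

/-- A monoid is cancellative if `a + c = b + c` implies `a = b`. -/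
def Cancellative (M : Type*) [AddCommMonoid M] : Prop :=
  ∀ a b c : M, a + c = b + c → a = b

/-- A monoid homomorphism `h : Q →+ P` is integral if whenever
`p1 + h q1 = p2 + h q2` there are `q3, q4, p` with `p1 = p + h q4`,
`p2 = p + h q3` and `q1 + q4 = q2 + q3`. -/
def IntegralHom {Q P : Type*} [AddCommMonoid Q] [AddCommMonoid P] (h : Q →+ P) : Prop :=
  ∀ (q1 q2 : Q) (p1 p2 : P), p1 + h q1 = p2 + h q2 →
    ∃ (q3 q4 : Q) (p : P), p1 = p + h q4 ∧ p2 = p + h q3 ∧ q1 + q4 = q2 + q3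

/-- An element `p` of `P` is `Q`-primitive (relative to `h : Q →+ P`) if whenever
`p = p' + h q` one has `q = 0`. -/
def QPrimitive {Q P : Type*} [AddCommMonoid Q] [AddCommMonoid P] (h : Q →+ P) (p : P) : Prop :=
  ∀ (p' : P) (q : Q), p = p' + h q → q = 0

/-- Membership in the ideal `I_Q = {h q + p : q ∈ Q, q ≠ 0, p ∈ P}`. -/
def MemIQ {Q P : Type*} [AddCommMonoid Q] [AddCommMonoid P] (h : Q →+ P) (p : P) : Prop :=
  ∃ q : Q, q ≠ 0 ∧ ∃ p' : P, p = h q + p'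

/-- `h` is without nilpotents if `n • p ∈ I_Q` for some `n ≥ 1` implies `p ∈ I_Q`. -/
def WithoutNilpotents {Q P : Type*} [AddCommMonoid Q] [AddCommMonoid P] (h : Q →+ P) : Prop :=
  ∀ (p : P) (n : ℕ), 1 ≤ n → MemIQ h (n • p) → MemIQ h p

/-- The congruence on `P` identifying `p ∼ p'` iff `p + h q = p' + h q'` for some
`q, q' ∈ Q`; the quotient monoid `P/Q` is its quotient. -/
def quotCon {Q P : Type*} [AddCommMonoid Q] [AddCommMonoid P] (h : Q →+ P) : AddCon P where
  r p p' := ∃ q q' : Q, p + h q = p' + h q'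
  iseqv := by
    constructor
    · exact fun p => ⟨0, 0, rfl⟩
    · rintro p p' ⟨q, q', e⟩; exact ⟨q', q, e.symm⟩
    · rintro p p' p'' ⟨q, q', e1⟩ ⟨s, s', e2⟩
      refine ⟨q + s, s' + q', ?_⟩
      calc p + h (q + s) = (p + h q) + h s := by rw [map_add, add_assoc]
        _ = (p' + h q') + h s := by rw [e1]
        _ = (p' + h s) + h q' := add_right_comm _ _ _
        _ = (p'' + h s') + h q' := by rw [e2]
        _ = p'' + h (s' + q') := by rw [map_add, add_assoc]
  add' := by
    rintro a b c d ⟨q1, q1', e1⟩ ⟨q2, q2', e2⟩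
    refine ⟨q1 + q2, q1' + q2', ?_⟩
    calc (a + c) + h (q1 + q2) = (a + h q1) + (c + h q2) := by
          rw [map_add]; exact add_add_add_comm _ _ _ _
      _ = (b + h q1') + (d + h q2') := by rw [e1, e2]
      _ = (b + d) + h (q1' + q2') := by rw [map_add]; exact (add_add_add_comm _ _ _ _).symm

/-- A monoid is saturated if it is cancellative and whenever `n • a = n • b + p`
for some `n ≥ 1` there is `p'` with `a = b + p'`. -/
def Saturated (M : Type*) [AddCommMonoid M] : Prop :=
  Cancellative M ∧ ∀ (a b p : M) (n : ℕ), 1 ≤ n → n • a = n • b + p → ∃ p' : M, a = b + p'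

section Aux

/-- In a sharp, cancellative, f.g. monoid, strict divisibility is well-founded. -/
theorem wf_strict_div {M : Type*} [AddCommMonoid M] (hs : Sharp M) (hc : Cancellative M)
    (hfg : AddMonoid.FG M) :
    WellFounded (fun a b : M => ∃ x : M, x ≠ 0 ∧ b = a + x) := by
  classical
  haveI : IsIrrefl M (fun a b : M => ∃ x : M, x ≠ 0 ∧ b = a + x) := by
    constructor
    rintro a ⟨x, hx, he⟩
    exact hx (hc x 0 a (by rw [zero_add, add_comm]; exact he.symm))
  haveI : IsTrans M (fun a b : M => ∃ x : M, x ≠ 0 ∧ b = a + x) := by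
    constructor
    rintro a b c ⟨x, hx, hab⟩ ⟨y, _, hbc⟩
    exact ⟨x + y, fun h0 => hx (hs x y h0), by rw [hbc, hab, add_assoc]⟩
  haveI : IsStrictOrder M (fun a b : M => ∃ x : M, x ≠ 0 ∧ b = a + x) := { }
  rw [RelEmbedding.wellFounded_iff_isEmpty]
  constructor
  intro e
  set f : ℕ → M := fun n => e n with hf
  have hdesc : ∀ n : ℕ, ∃ x : M, x ≠ 0 ∧ f n = f (n + 1) + x := by
    intro n
    exact e.map_rel_iff.2 (Nat.lt_succ_self n)
  choose x hx0 hxe using hdesc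
  have cum : ∀ i k : ℕ, ∃ y : M, f i = f (i + k) + y ∧ (k ≠ 0 → y ≠ 0) := by
    intro i k
    induction k with
    | zero => exact ⟨0, by simp, by simp⟩
    | succ k ih =>
      obtain ⟨y, hy, _⟩ := ih
      refine ⟨x (i + k) + y, ?_, ?_⟩
      · have hidx : i + (k + 1) = i + k + 1 := rfl
        rw [hy, hxe (i + k), hidx, add_assoc]
      · intro _ h0
        exact hx0 (i + k) (hs _ _ h0)
  obtain ⟨S, hS⟩ := hfg.fg_top
  have hmem : ∀ n, f n ∈ AddSubmonoid.closure (S : Set M) := by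
    intro n; rw [hS]; trivial
  choose l hl hsum using fun n => AddSubmonoid.exists_multiset_of_mem_closure (hmem n)
  have hsub : ∀ n, (l n).toFinset ⊆ S := fun n a ha => hl n a (Multiset.mem_toFinset.mp ha)
  have hrep : ∀ n, f n = ∑ a ∈ S, (l n).count a • a := by
    intro n
    rw [← hsum n]
    exact Finset.sum_multiset_count_of_subset (l n) S (hsub n)
  have hpwo : (Set.univ : Set (↥S → ℕ)).IsPWO :=
    Set.isPWO_of_wellQuasiOrderedLE Set.univ
  obtain ⟨i, j, hij, hle⟩ := Set.PartiallyWellOrderedOn.exists_lt hpwo (f := fun n (s : ↥S) => (l n).count ↑s) (fun _ => Set.mem_univ _)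
  have hcount : ∀ a ∈ S, (l i).count a ≤ (l j).count a := fun a ha => hle ⟨a, ha⟩
  set d : M := ∑ a ∈ S, ((l j).count a - (l i).count a) • a with hdd
  have hd : f j = f i + d := by
    rw [hrep j, hrep i, hdd, ← Finset.sum_add_distrib]
    exact Finset.sum_congr rfl fun a ha => by
      rw [← add_smul, Nat.add_sub_cancel' (hcount a ha)]
  obtain ⟨y, hy, hy0⟩ := cum i (j - i)
  rw [Nat.add_sub_cancel' hij.le] at hy
  have hy' : y ≠ 0 := hy0 (by omega)
  have A : f i = f i + (d + y) := by
    nth_rewrite 1 [hy]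
    rw [hd, add_assoc]
  have A' : (d + y) + f i = 0 + f i := by rw [zero_add, add_comm]; exact A.symm
  have h0 : d + y = 0 := hc _ _ _ A'
  exact hy' (hs y d (by rwa [add_comm] at h0))

/-- Integral homs into sharp monoids are exact. -/
theorem exact_of_integral {Q P : Type*} [AddCommMonoid Q] [AddCommMonoid P]
    (hPsharp : Sharp P) (h : Q →+ P) (hint : IntegralHom h)
    (p : P) (a b : Q) (hpb : p + h b = h a) : ∃ q : Q, p = h q := by
  obtain ⟨q3, q4, p0, e1, e2, _⟩ := hint b a p 0 (by rw [hpb, zero_add])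
  have hp0 : p0 = 0 := hPsharp p0 (h q3) e2.symm
  exact ⟨q4, by rw [e1, hp0, zero_add]⟩

/-- Key lemma: if `n • r ∈ h(Q)` then `r ∈ h(Q)`. -/
theorem mem_of_nsmul_mem {Q P : Type*} [AddCommMonoid Q] [AddCommMonoid P]
    (hPsharp : Sharp P) (hPcanc : Cancellative P) (hPfg : AddMonoid.FG P)
    (h : Q →+ P) (hinj : Function.Injective h) (hint : IntegralHom h)
    (hnil : WithoutNilpotents h) (n : ℕ) (hn : 1 ≤ n) :
    ∀ r : P, ∀ s : Q, n • r = h s → ∃ w : Q, r = h w := by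
  have wf := wf_strict_div hPsharp hPcanc hPfg
  intro r
  induction r using WellFounded.induction wf with
  | _ r IH =>
    intro s hrs
    by_cases hs0 : s = 0
    · subst hs0
      rw [map_zero] at hrs
      obtain ⟨m, rfl⟩ : ∃ m, n = m + 1 := ⟨n - 1, by omega⟩
      rw [succ_nsmul] at hrs
      have : r = 0 := hPsharp r _ (by rw [add_comm]; exact hrs)
      exact ⟨0, by rw [this, map_zero]⟩
    · have hIQ : MemIQ h (n • r) := ⟨s, hs0, 0, by rw [hrs, add_zero]⟩
      obtain ⟨q, hq, p', hp'⟩ := hnil r n hn hIQ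
      have e : n • p' + h (n • q) = h s := by
        rw [map_nsmul, ← hrs, hp', smul_add, add_comm]
      obtain ⟨s', hs'⟩ := exact_of_integral hPsharp h hint (n • p') s (n • q) e
      have hlt : ∃ x : P, x ≠ 0 ∧ r = p' + x :=
        ⟨h q, fun h0 => hq (hinj (h0.trans (map_zero h).symm)), by rw [hp', add_comm]⟩
      obtain ⟨w', hw'⟩ := IH p' hlt s' hs'
      exact ⟨q + w', by rw [hp', hw', map_add]⟩

end Aux

/-- For an injective, integral homomorphism `h : Q →+ P` of fine, sharp monoids,
without nilpotents, with `P` saturated, the quotient group `P^gp / Q^gp` is torsion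
free; elementwise: if `n • p1` and `n • p2` agree modulo `Q` for some `n ≥ 1`, then
`p1` and `p2` agree modulo `Q`. -/


theorem torsionFree_of_no_nilpotents {Q P : Type*} [AddCommMonoid Q] [AddCommMonoid P]
    (hQsharp : Sharp Q) (hQcanc : Cancellative Q) (hQfg : AddMonoid.FG Q)
    (hPsharp : Sharp P) (hPcanc : Cancellative P) (hPfg : AddMonoid.FG P)
    (h : Q →+ P) (hinj : Function.Injective h) (hint : IntegralHom h)
    (hnil : WithoutNilpotents h) (hsat : Saturated P) :
    ∀ (p1 p2 : P) (n : ℕ), 1 ≤ n →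
      (∃ q1 q2 : Q, n • p1 + h q1 = n • p2 + h q2) →
      ∃ q1' q2' : Q, p1 + h q1' = p2 + h q2' := by
  rintro p1 p2 n hn ⟨q1, q2, heq⟩
  obtain ⟨m, rfl⟩ : ∃ m, n = m + 1 := ⟨n - 1, by omega⟩
  obtain ⟨q3, q4, p, e1, e2, _⟩ := hint q1 q2 ((m + 1) • p1) ((m + 1) • p2) heq
  have eq1 : (m + 1) • (p1 + m • p2) = (m + 1) • p + (h q4 + m • (h q3)) := by
    rw [smul_add, smul_comm (m + 1) m p2, e1, e2, smul_add, succ_nsmul]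
    abel
  obtain ⟨r, hr⟩ := hsat.2 (p1 + m • p2) p (h q4 + m • (h q3)) (m + 1) (by omega) eq1
  have eq2 : (m + 1) • r = h (q4 + m • q3) := by
    apply hPcanc _ _ ((m + 1) • p)
    rw [map_add, map_nsmul]
    calc (m + 1) • r + (m + 1) • p = (m + 1) • (p + r) := by rw [smul_add, add_comm]
      _ = (m + 1) • (p1 + m • p2) := by rw [hr]
      _ = (m + 1) • p + (h q4 + m • (h q3)) := eq1
      _ = (h q4 + m • h q3) + (m + 1) • p := add_comm _ _
  obtain ⟨w, hw⟩ := mem_of_nsmul_mem hPsharp hPcanc hPfg h hinj hint hnil (m + 1) (by omega)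
    r (q4 + m • q3) eq2
  refine ⟨q3, w, hPcanc _ _ (p + m • p2) ?_⟩
  calc (p1 + h q3) + (p + m • p2)
      = (p1 + m • p2) + (p + h q3) := by abel
    _ = (p + h w) + (p + h q3) := by rw [hr, hw]
    _ = (p + h w) + ((m + 1) • p2) := by rw [← e2]
    _ = (p + h w) + (m • p2 + p2) := by rw [succ_nsmul]
    _ = (p2 + h w) + (p + m • p2) := by abel
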